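/- Let f : ℝ^d → ℝ be locally Lipschitz and assume hypotheses (H1)–(H5) of the setting. Define D₂ := μ/2, C₁ := γ/4, C₂ := min{γ/(8C_a), min{1, 1/δ_A}/2}, C₃ := C₁²/(8L), C₄ := min{β/(C_a(1+δ_A)), min{μ/δ_A, C₃D₂/β}/(4(1+(1+δ_A)C_M)(μ+L)), 1/2}, C₅ := min{β/(2C_a), C₃D₂/(32C_aβ), C₄, C₂/4}. Then for every x ∈ ball(x̄, δ_A/2), every σ > 0, every nonzero g ∈ ∂_σ f(x), and every nonzero ĝ ∈ ∂f(x − σ·g/‖g‖), if ‖g − Q_x g‖ ≥ C₃·‖P x − x̄‖² and max{dist(x, M)/σ, σ} ≤ C₅·‖P x − x̄‖, then every minimal-norm element g' of the segment [g, ĝ] satisfies ‖g' − Q_x g'‖² ≤ (1 − 3D₂²/(64L²))·‖g − Q_x g‖². -/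

import Mathlib

set_option maxHeartbeats 1000000


open Metric Set Filter
open scoped InnerProductSpace

abbrev Euc (d : ℕ) := EuclideanSpace ℝ (Fin d)

noncomputable def clarkeSubdiff {d : ℕ} (f : Euc d → ℝ) (x : Euc d) : Set (Euc d) :=
  convexHull ℝ {v | ∃ u : ℕ → Euc d,
    (∀ n, DifferentiableAt ℝ f (u n)) ∧
    Tendsto u atTop (nhds x) ∧
    Tendsto (fun n => gradient f (u n)) atTop (nhds v)}

noncomputable def goldsteinSubdiff {d : ℕ} (f : Euc d → ℝ) (σ : ℝ) (x : Euc d) : Set (Euc d) :=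
  convexHull ℝ (⋃ y ∈ closedBall x σ, clarkeSubdiff f y)

lemma min_norm_varineq {E : Type*} [NormedAddCommGroup E] [InnerProductSpace ℝ E]
    {s : Set E} (hs : Convex ℝ s) {g' : E} (hg' : g' ∈ s)
    (hmin : ∀ h ∈ s, ‖g'‖ ≤ ‖h‖) {c : E} (hc : c ∈ s) :
    0 ≤ ⟪g', c - g'⟫_ℝ := by
  by_contra h
  push_neg at h
  have hcne : c - g' ≠ 0 := by
    intro he; rw [he] at h; simp at h
  have hK : 0 < ‖c - g'‖^2 := by
    have := norm_pos_iff.mpr hcne; positivity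
  set K := ‖c - g'‖^2 with hKdef
  set θ : ℝ := min 1 (-(⟪g', c - g'⟫_ℝ)/K) with hθ
  have hθ0 : 0 < θ := by
    apply lt_min one_pos
    apply div_pos (by linarith) hK
  have hθ1 : θ ≤ 1 := min_le_left _ _
  have hθK : θ * K ≤ -(⟪g', c - g'⟫_ℝ) := by
    have := min_le_right 1 (-(⟪g', c - g'⟫_ℝ)/K)
    calc θ * K ≤ (-(⟪g', c - g'⟫_ℝ)/K) * K := by nlinarith
    _ = -(⟪g', c - g'⟫_ℝ) := by field_simp
  have hmem : g' + θ • (c - g') ∈ s := by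
    have := hs hg' hc (by linarith : (0:ℝ) ≤ 1 - θ) (le_of_lt hθ0) (by ring)
    convert this using 1
    simp [smul_sub]; module
  have hle := hmin _ hmem
  have hsq : ‖g'‖^2 ≤ ‖g' + θ • (c - g')‖^2 := by
    apply pow_le_pow_left₀ (norm_nonneg _) hle
  rw [norm_add_sq_real, real_inner_smul_right, norm_smul] at hsq
  have h2 : (‖θ‖ * ‖c - g'‖)^2 = θ^2 * K := by
    rw [hKdef, Real.norm_eq_abs, mul_pow, sq_abs]
  rw [h2] at hsq
  nlinarith [mul_le_mul_of_nonneg_left hθK (le_of_lt hθ0)]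

theorem stmt7 {d : ℕ}
    (f : Euc d → ℝ) (hf : LocallyLipschitz f)
    (xbar : Euc d) (M : Set (Euc d)) (hxbarM : xbar ∈ M)
    (δA L μ γ β Ca CM : ℝ)
    (hδA : 0 < δA) (hL : 0 < L) (hμ : 0 < μ) (hγ : 0 < γ) (hβ : 0 < β)
    (hCa : 0 < Ca) (hCM : 0 < CM)
    (P : Euc d → Euc d)
    (hP : ∀ z ∈ ball xbar (2*δA), P z ∈ M ∧ ‖z - P z‖ = Metric.infDist z M)
    (Tsp : Euc d → Submodule ℝ (Euc d)) (Q : Euc d → Euc d → Euc d)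
    (hQ : ∀ x ∈ ball xbar δA, ∀ v, Q x v = ((Tsp x).orthogonalProjectionOnto v : Euc d))
    (G : Euc d → Euc d)
    (hG : ∀ x ∈ ball xbar δA, G x ∈ Tsp x)
    (H1 : ∀ x' ∈ ball xbar (2*δA), ∀ v ∈ clarkeSubdiff f x', ‖v‖ ≤ L)
    (H2 : ∀ x' ∈ ball xbar δA, ∀ v ∈ clarkeSubdiff f x',
      μ * Metric.infDist x' M ≤ ⟪ v, x' - P x' ⟫_ℝ)
    (H3 : ∀ x ∈ ball xbar δA, ∀ x' ∈ ball xbar (2*δA),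
      ‖P x' - P x - Q x (x' - x)‖ ≤ CM * (Metric.infDist x M ^ 2 + ‖x - x'‖ ^ 2))
    (H4 : ∀ x ∈ ball xbar δA, ∀ σ ∈ Icc (0:ℝ) δA, ∀ g ∈ goldsteinSubdiff f σ x,
      ‖Q x (g - G x)‖ ≤ Ca * (Metric.infDist x M + σ))
    (H5 : ∀ x ∈ ball xbar δA, γ/2 * ‖P x - xbar‖ ≤ ‖G x‖ ∧ ‖G x‖ ≤ β * ‖P x - xbar‖)
    (D₂ C₁ C₂ C₃ C₄ C₅ : ℝ)
    (hD₂ : D₂ = μ/2)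
    (hC₁ : C₁ = γ/4)
    (hC₂ : C₂ = min (γ/(8*Ca)) (min 1 (1/δA) / 2))
    (hC₃ : C₃ = C₁^2/(8*L))
    (hC₄ : C₄ = min (β/(Ca*(1+δA)))
      (min (min (μ/δA) (C₃*D₂/β) / (4*(1+(1+δA)*CM)*(μ+L))) (1/2)))
    (hC₅ : C₅ = min (β/(2*Ca)) (min (C₃*D₂/(32*Ca*β)) (min C₄ (C₂/4))))
    (x : Euc d) (hx : x ∈ ball xbar (δA/2)) (σ : ℝ) (hσ : 0 < σ)
    (g : Euc d) (hg : g ∈ goldsteinSubdiff f σ x) (hgne : g ≠ 0)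
    (ghat : Euc d) (hghat : ghat ∈ clarkeSubdiff f (x - (σ/‖g‖) • g)) (hghatne : ghat ≠ 0)
    (hlow : C₃ * ‖P x - xbar‖^2 ≤ ‖g - Q x g‖)
    (hcond : max (Metric.infDist x M / σ) σ ≤ C₅ * ‖P x - xbar‖)
    (g' : Euc d) (hg'seg : g' ∈ segment ℝ g ghat)
    (hg'min : ∀ h ∈ segment ℝ g ghat, ‖g'‖ ≤ ‖h‖) :
    ‖g' - Q x g'‖^2 ≤ (1 - 3*D₂^2/(64*L^2)) * ‖g - Q x g‖^2 := by
  -- ### basic positions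
  have hxn : ‖x - xbar‖ < δA / 2 := by rw [mem_ball, dist_eq_norm] at hx; exact hx
  have hxA : x ∈ ball xbar δA := by rw [mem_ball, dist_eq_norm]; linarith
  have hx2A : x ∈ ball xbar (2*δA) := by rw [mem_ball, dist_eq_norm]; linarith
  obtain ⟨hPxM, hPxd⟩ := hP x hx2A
  set D := Metric.infDist x M with hDdef
  set r := ‖P x - xbar‖ with hrdef
  set a := ‖g - Q x g‖ with hadef
  have hD0 : 0 ≤ D := Metric.infDist_nonneg
  have hDx : D ≤ ‖x - xbar‖ := by
    rw [hDdef, ← dist_eq_norm]; exact Metric.infDist_le_dist_of_mem hxbarM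
  have hgn : 0 < ‖g‖ := norm_pos_iff.mpr hgne
  -- ### constants
  have hD₂pos : 0 < D₂ := by rw [hD₂]; positivity
  have hC₁pos : 0 < C₁ := by rw [hC₁]; positivity
  have hC₃pos : 0 < C₃ := by rw [hC₃]; positivity
  set K₀ : ℝ := 1+(1+δA)*CM with hK₀def
  have hK₀pos : 0 < K₀ := by rw [hK₀def]; positivity
  have hC₂pos : 0 < C₂ := by
    rw [hC₂]; apply lt_min (by positivity)
    have : (0:ℝ) < min 1 (1/δA) := lt_min one_pos (by positivity)
    linarith
  have hC₄pos : 0 < C₄ := by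
    rw [hC₄]
    apply lt_min (by positivity)
    apply lt_min ?_ (by norm_num)
    apply div_pos (lt_min (by positivity) (by positivity)) (by positivity)
  have hC₅pos : 0 < C₅ := by
    rw [hC₅]
    exact lt_min (by positivity) (lt_min (by positivity) (lt_min hC₄pos (by linarith)))
  have hC₅a : C₅ ≤ β/(2*Ca) := by rw [hC₅]; exact min_le_left _ _
  have hC₅b : C₅ ≤ C₃*D₂/(32*Ca*β) := by
    rw [hC₅]; exact le_trans (min_le_right _ _) (min_le_left _ _)
  have hC₅c : C₅ ≤ C₄ := by
    rw [hC₅]; exact le_trans (min_le_right _ _) (le_trans (min_le_right _ _) (min_le_left _ _))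
  have hC₅d : C₅ ≤ C₂/4 := by
    rw [hC₅]; exact le_trans (min_le_right _ _) (le_trans (min_le_right _ _) (min_le_right _ _))
  have hC₂e : C₂ ≤ 1/2 := by
    rw [hC₂]
    refine le_trans (min_le_right _ _) ?_
    have : min (1:ℝ) (1/δA) ≤ 1 := min_le_left _ _
    linarith
  have hC₂f : C₂ ≤ 1/δA/2 := by
    rw [hC₂]
    refine le_trans (min_le_right _ _) ?_
    have : min (1:ℝ) (1/δA) ≤ 1/δA := min_le_right _ _
    linarith
  have hC₅e : C₅ ≤ 1/8 := by linarith
  have hC₅f : C₅ * δA ≤ 1/8 := by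
    have h1 : C₅ ≤ 1/δA/8 := by linarith
    have := mul_le_mul_of_nonneg_right h1 hδA.le
    calc C₅ * δA ≤ 1/δA/8 * δA := this
    _ = 1/8 := by field_simp
  have hμL : 0 < μ + L := by linarith
  have hC₄m : C₄ ≤ min (μ/δA) (C₃*D₂/β) / (4*K₀*(μ+L)) := by
    rw [hC₄]
    exact le_trans (min_le_right _ _) (min_le_left _ _)
  have hA1 : C₅*(4*K₀*(μ+L)) ≤ μ/δA := by
    have h1 : C₅ ≤ μ/δA / (4*K₀*(μ+L)) :=
      le_trans (hC₅c.trans hC₄m) (by gcongr; exact min_le_left _ _)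
    exact (le_div_iff₀ (by positivity)).mp h1
  have hA2 : C₅*(4*K₀*(μ+L)) ≤ C₃*D₂/β := by
    have h1 : C₅ ≤ C₃*D₂/β / (4*K₀*(μ+L)) :=
      le_trans (hC₅c.trans hC₄m) (by gcongr; exact min_le_right _ _)
    exact (le_div_iff₀ (by positivity)).mp h1
  have hB1 : C₅*(4*K₀*(μ+L))*δA ≤ μ := by
    have := (le_div_iff₀ hδA).mp hA1; linarith
  have hB2 : C₅*(4*K₀*(μ+L))*β ≤ C₃*D₂ := by
    have := (le_div_iff₀ hβ).mp hA2; linarith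
  have hB3 : C₅*(32*Ca*β) ≤ C₃*D₂ := by
    have := (le_div_iff₀ (by positivity : (0:ℝ) < 32*Ca*β)).mp hC₅b; linarith
  have hB4 : C₅*(2*Ca) ≤ β := by
    have := (le_div_iff₀ (by positivity : (0:ℝ) < 2*Ca)).mp hC₅a; linarith
  -- ### consequences of hcond
  have hσr : σ ≤ C₅ * r := le_trans (le_max_right _ _) hcond
  have hDσr : D / σ ≤ C₅ * r := le_trans (le_max_left _ _) hcond
  have hDr : D ≤ C₅ * r * σ := by
    rw [div_le_iff₀ hσ] at hDσr; linarith
  have hr0 : 0 < r := by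
    rcases lt_or_ge 0 r with h | h
    · exact h
    · exfalso
      have := mul_le_mul_of_nonneg_left h hC₅pos.le
      simp only [mul_zero] at this
      linarith
  have hrδ : r < δA := by
    have h1 : r ≤ ‖x - P x‖ + ‖x - xbar‖ := by
      calc r = ‖P x - xbar‖ := hrdef
      _ ≤ ‖P x - x‖ + ‖x - xbar‖ := norm_sub_le_norm_sub_add_norm_sub _ _ _
      _ = ‖x - P x‖ + ‖x - xbar‖ := by rw [norm_sub_rev]
    rw [hPxd] at h1
    linarith
  have hC₅r : C₅ * r ≤ 1/8 := by
    have := mul_le_mul_of_nonneg_left hrδ.le hC₅pos.le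
    linarith
  have hσδA : σ ≤ δA := by
    have := mul_le_mul_of_nonneg_right hC₅e hr0.le
    linarith
  have hDδ : D ≤ δA := by linarith
  have ha : C₃ * r^2 ≤ a := hlow
  have ha0 : 0 < a := by
    have : 0 < C₃ * r^2 := by positivity
    linarith
  -- ### projection Q facts
  have hQadd : ∀ v u : Euc d, Q x (v + u) = Q x v + Q x u := by
    intro v u
    rw [hQ x hxA, hQ x hxA, hQ x hxA, map_add, Submodule.coe_add]
  have hQsmul : ∀ (c : ℝ) (v : Euc d), Q x (c • v) = c • Q x v := by
    intro c v
    rw [hQ x hxA, hQ x hxA, map_smul, Submodule.coe_smul]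
  have hQsub : ∀ v u : Euc d, Q x (v - u) = Q x v - Q x u := by
    intro v u
    rw [hQ x hxA, hQ x hxA, hQ x hxA, map_sub, Submodule.coe_sub]
  have hQmem : ∀ v : Euc d, Q x v ∈ Tsp x := by
    intro v; rw [hQ x hxA]; exact SetLike.coe_mem _
  have hQG : Q x (G x) = G x := by
    rw [hQ x hxA]; exact Submodule.starProjection_eq_self_iff.mpr (hG x hxA)
  have horth : ∀ v u : Euc d, u ∈ Tsp x → ⟪v - Q x v, u⟫_ℝ = 0 := by
    intro v u hu
    rw [hQ x hxA]
    exact (Submodule.mem_orthogonal' _ _).mp (Submodule.sub_starProjection_mem_orthogonal v) u hu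
  have hdecomp : ∀ v : Euc d, ‖v‖^2 = ‖Q x v‖^2 + ‖v - Q x v‖^2 := by
    intro v
    have h0 : ⟪Q x v, v - Q x v⟫_ℝ = 0 := by
      rw [real_inner_comm]; exact horth v _ (hQmem v)
    have h1 : v = Q x v + (v - Q x v) := by abel
    calc ‖v‖^2 = ‖Q x v + (v - Q x v)‖^2 := by rw [← h1]
    _ = _ := by rw [norm_add_sq_real, h0]; ring
  have hsplit : ∀ v u : Euc d, ⟪v, u⟫_ℝ = ⟪Q x v, Q x u⟫_ℝ + ⟪v - Q x v, u - Q x u⟫_ℝ := by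
    intro v u
    have h1 : ⟪v - Q x v, Q x u⟫_ℝ = 0 := horth v _ (hQmem u)
    have h2 : ⟪Q x v, u - Q x u⟫_ℝ = 0 := by
      rw [real_inner_comm]; exact horth u _ (hQmem v)
    have hv : v = Q x v + (v - Q x v) := by abel
    have hu : u = Q x u + (u - Q x u) := by abel
    conv_lhs => rw [hv, hu]
    rw [inner_add_left, inner_add_right, inner_add_right, h1, h2]
    ring
  have hNw : ∀ v : Euc d, ⟪v - Q x v, g - Q x g⟫_ℝ = ⟪v, g - Q x g⟫_ℝ := by
    intro v
    have h0 : ⟪Q x v, g - Q x g⟫_ℝ = 0 := by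
      rw [real_inner_comm]; exact horth g _ (hQmem v)
    rw [inner_sub_left, h0, sub_zero]
  -- ### the point y
  set τ := σ/‖g‖ with hτdef
  have hτ : 0 < τ := by rw [hτdef]; exact div_pos hσ hgn
  set y := x - (σ/‖g‖) • g with hydef
  have hyx : y - x = -(τ • g) := by rw [hydef, hτdef]; abel
  have hyxn : ‖y - x‖ = σ := by
    rw [hyx, norm_neg, norm_smul, Real.norm_eq_abs, abs_of_pos hτ, hτdef,
      div_mul_cancel₀ _ hgn.ne']
  have hyA : y ∈ ball xbar δA := by
    rw [mem_ball, dist_eq_norm]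
    calc ‖y - xbar‖ ≤ ‖y - x‖ + ‖x - xbar‖ := norm_sub_le_norm_sub_add_norm_sub _ _ _
    _ < δA := by
        rw [hyxn]
        have := mul_le_mul_of_nonneg_right hC₅e hr0.le
        linarith
  have hy2A : y ∈ ball xbar (2*δA) := by
    rw [mem_ball] at hyA ⊢; linarith [hyA]
  obtain ⟨hPyM, hPyd⟩ := hP y hy2A
  -- ### subgradient bounds
  have hghatL : ‖ghat‖ ≤ L := H1 y hy2A ghat hghat
  have hgsub : goldsteinSubdiff f σ x ⊆ closedBall (0:Euc d) L := by
    apply convexHull_min ?_ (convex_closedBall _ _)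
    intro v hv
    rw [Set.mem_iUnion₂] at hv
    obtain ⟨z, hz, hvz⟩ := hv
    have hz2A : z ∈ ball xbar (2*δA) := by
      rw [mem_ball]
      calc dist z xbar ≤ dist z x + dist x xbar := dist_triangle _ _ _
      _ < 2*δA := by
          rw [mem_closedBall] at hz
          rw [mem_ball] at hx
          linarith
    rw [mem_closedBall_zero_iff]
    exact H1 z hz2A v hvz
  have hgL : ‖g‖ ≤ L := mem_closedBall_zero_iff.mp (hgsub hg)
  have hghatGold : ghat ∈ goldsteinSubdiff f σ x := by
    apply subset_convexHull
    apply Set.mem_biUnion ?_ hghat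
    rw [mem_closedBall, dist_eq_norm, hyxn]
  -- ### H4 bounds
  set ε := Ca * (D + σ) with hεdef
  have hε0 : 0 ≤ ε := by rw [hεdef]; exact mul_nonneg hCa.le (by linarith)
  have hQgG : ‖Q x g - G x‖ ≤ ε := by
    rw [← hQG, ← hQsub]
    exact H4 x hxA σ ⟨hσ.le, hσδA⟩ g hg
  have hQghatG : ‖Q x ghat - G x‖ ≤ ε := by
    rw [← hQG, ← hQsub]
    exact H4 x hxA σ ⟨hσ.le, hσδA⟩ ghat hghatGold
  have hGup : ‖G x‖ ≤ β * r := (H5 x hxA).2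
  have hQgn : ‖Q x g‖ ≤ β*r + ε := by
    have h1 := norm_le_norm_add_norm_sub' (Q x g) (G x)
    linarith only [h1, hQgG, hGup]
  have hQghatn : ‖Q x ghat‖ ≤ β*r + ε := by
    have h1 := norm_le_norm_add_norm_sub' (Q x ghat) (G x)
    linarith only [h1, hQghatG, hGup]
  have hQdiff : ‖Q x g - Q x ghat‖ ≤ 2*ε := by
    have h1 : (Q x g - G x) - (Q x ghat - G x) = Q x g - Q x ghat :=
      sub_sub_sub_cancel_right _ _ _
    have h2 := norm_sub_le (Q x g - G x) (Q x ghat - G x)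
    rw [h1] at h2
    linarith only [h2, hQgG, hQghatG]
  -- ### epsilon bounds
  have hC₅r0 : (0:ℝ) ≤ C₅ * r := le_of_lt (mul_pos hC₅pos hr0)
  have hεb : ε ≤ (9/8) * (Ca * (C₅*r)) := by
    have h0 : D ≤ (C₅*r)*(C₅*r) := by
      have := mul_le_mul_of_nonneg_left hσr hC₅r0
      linarith only [hDr, this]
    have h1 : D ≤ (1/8) * (C₅ * r) := by
      have := mul_le_mul_of_nonneg_right hC₅r hC₅r0
      linarith only [h0, this]
    have h2 := mul_le_mul_of_nonneg_left (add_le_add h1 hσr) hCa.le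
    rw [hεdef]
    linarith only [h2]
  have hεβ : ε ≤ β * r := by
    have h1 := mul_le_mul_of_nonneg_right hB4 hr0.le
    nlinarith only [hεb, h1, hr0, hβ, hCa, hC₅pos]
  have hη : 2*ε*(β*r+ε) ≤ (9/64)*(D₂*a) := by
    have e1 : ε*(β*r+ε) ≤ ε*(2*(β*r)) := by
      apply mul_le_mul_of_nonneg_left (by linarith only [hεβ]) hε0
    have e2 : ε*(2*(β*r)) ≤ (9/8)*(Ca*(C₅*r))*(2*(β*r)) := by
      apply mul_le_mul_of_nonneg_right hεb (by positivity)
    have e3 : (9/8)*(Ca*(C₅*r))*(2*(β*r)) = (9/128)*(C₅*(32*Ca*β))*r^2 := by ring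
    have e4 : (9/128)*(C₅*(32*Ca*β))*r^2 ≤ (9/128)*(C₃*D₂)*r^2 := by
      have := mul_le_mul_of_nonneg_right hB3 (sq_nonneg r)
      linarith only [this]
    have e5 : (9/128)*(C₃*D₂)*r^2 ≤ (9/128)*D₂*a := by
      have := mul_le_mul_of_nonneg_right ha hD₂pos.le
      linarith only [this]
    linarith only [e1, e2, e3, e4, e5]
  -- ### key normal inequality
  set E0 := P y - P x - Q x (y - x) with hE0def
  set e := CM * (D^2 + σ^2) with hedef
  have hE0 : ‖E0‖ ≤ e := by
    have h1 := H3 x hxA y hy2A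
    have h2 : ‖x - y‖ = σ := by rw [norm_sub_rev]; exact hyxn
    rw [h2] at h1
    exact h1
  have he0 : 0 ≤ e := by
    have h1 : 0 ≤ D^2 + σ^2 := by positivity
    rw [hedef]
    exact mul_nonneg hCM.le h1
  have hw : y - P y = (x - P x) - τ • (g - Q x g) - E0 := by
    have hq : Q x (y - x) = -(τ • Q x g) := by
      rw [hyx, show -(τ • g) = (-τ) • g by module, hQsmul]
      module
    rw [hE0def, hq, hydef, hτdef]
    module
  have hlown : τ*a - D - e ≤ ‖y - P y‖ := by
    have h1 : τ • (g - Q x g) = ((x - P x) - E0) - (y - P y) := by rw [hw]; module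
    have h2 : ‖τ • (g - Q x g)‖ ≤ ‖(x - P x) - E0‖ + ‖y - P y‖ := by
      rw [h1]; exact norm_sub_le _ _
    have h3 : ‖(x - P x) - E0‖ ≤ ‖x - P x‖ + ‖E0‖ := norm_sub_le _ _
    have h4 : ‖τ • (g - Q x g)‖ = τ * a := by
      rw [norm_smul, Real.norm_eq_abs, abs_of_pos hτ, ← hadef]
    rw [hPxd] at h3
    linarith only [h2, h3, h4, hE0]
  have hH2y := H2 y hyA ghat hghat
  rw [← hPyd] at hH2y
  have hinner : ⟪ghat, y - P y⟫_ℝ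
      = ⟪ghat, x - P x⟫_ℝ - τ * ⟪ghat, g - Q x g⟫_ℝ - ⟪ghat, E0⟫_ℝ := by
    rw [hw, inner_sub_right, inner_sub_right, real_inner_smul_right]
  have hb1 : ⟪ghat, x - P x⟫_ℝ ≤ L * D := by
    have h1 := real_inner_le_norm ghat (x - P x)
    rw [hPxd] at h1
    have h2 := mul_le_mul_of_nonneg_right hghatL hD0
    linarith only [h1, h2]
  have hb2 : -(L*e) ≤ ⟪ghat, E0⟫_ℝ := by
    have h1 := abs_real_inner_le_norm ghat E0
    have h2 : ‖ghat‖*‖E0‖ ≤ L*e := mul_le_mul hghatL hE0 (norm_nonneg _) hL.le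
    have h3 := abs_le.mp (le_trans h1 h2)
    linarith only [h3.1]
  have hmulmono : μ * (τ*a - D - e) ≤ μ * ‖y - P y‖ := mul_le_mul_of_nonneg_left hlown hμ.le
  have hkey1 : τ * ⟪ghat, g - Q x g⟫_ℝ ≤ (μ+L)*(D+e) - μ*(τ*a) := by
    nlinarith only [hmulmono, hH2y, hinner, hb1, hb2]
  have hs1 : D + e ≤ K₀ * (C₅*r) * σ := by
    have d2 : D^2 ≤ (C₅*r*σ)*δA := by
      have := mul_le_mul hDr hDδ hD0 (by positivity)
      nlinarith only [this]
    have d3 : σ^2 ≤ (C₅*r)*σ := by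
      have := mul_le_mul_of_nonneg_right hσr hσ.le
      nlinarith only [this]
    have d4 := mul_le_mul_of_nonneg_left d2 hCM.le
    have d5 := mul_le_mul_of_nonneg_left d3 hCM.le
    rw [hedef, hK₀def]
    nlinarith only [d4, d5, hDr]
  have hgup : ‖g‖ ≤ 2*β*r + a := by
    have h1 := norm_le_norm_add_norm_sub' g (Q x g)
    rw [← hadef] at h1
    linarith only [h1, hQgn, hεβ]
  have hst3 : (μ+L)*K₀*(C₅*r)*(2*β*r + a) ≤ D₂*a := by
    have u1 : C₅*(4*K₀*(μ+L))*β * (r^2/2) ≤ C₃*D₂*(r^2/2) :=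
      mul_le_mul_of_nonneg_right hB2 (by positivity)
    have u2 : C₃*r^2*(D₂/2) ≤ a*(D₂/2) := mul_le_mul_of_nonneg_right ha (by positivity)
    have u3 : C₅*(4*K₀*(μ+L))*r ≤ C₅*(4*K₀*(μ+L))*δA := by
      have hpos : (0:ℝ) ≤ C₅*(4*K₀*(μ+L)) := by positivity
      exact mul_le_mul_of_nonneg_left hrδ.le hpos
    have u4 : (C₅*(4*K₀*(μ+L))*r)*(a/4) ≤ μ*(a/4) :=
      mul_le_mul_of_nonneg_right (u3.trans hB1) (by positivity)
    rw [hD₂] at u1 u2 ⊢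
    nlinarith only [u1, u2, u4]
  have hkey2 : (μ+L)*(D+e) ≤ (D₂*a)*τ := by
    have c1 : (μ+L)*(D+e) ≤ (μ+L)*(K₀*(C₅*r)*σ) := mul_le_mul_of_nonneg_left hs1 hμL.le
    have hστ : σ = τ*‖g‖ := by rw [hτdef]; field_simp
    have c2 : (μ+L)*(K₀*(C₅*r)*σ) = ((μ+L)*K₀*(C₅*r)*‖g‖)*τ := by rw [hστ]; ring
    have c3 : (μ+L)*K₀*(C₅*r)*‖g‖ ≤ D₂*a := by
      have hpos : (0:ℝ) ≤ (μ+L)*K₀*(C₅*r) := by positivity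
      have h1 := mul_le_mul_of_nonneg_left hgup hpos
      nlinarith only [h1, hst3]
    have c4 : ((μ+L)*K₀*(C₅*r)*‖g‖)*τ ≤ (D₂*a)*τ := mul_le_mul_of_nonneg_right c3 hτ.le
    linarith only [c1, c2, c4]
  have hkey : ⟪ghat, g - Q x g⟫_ℝ ≤ -(D₂*a) := by
    have hμ2 : μ*(τ*a) = 2*((D₂*a)*τ) := by rw [hD₂]; ring
    have h1 : τ * ⟪ghat, g - Q x g⟫_ℝ ≤ τ * (-(D₂*a)) := by
      nlinarith only [hkey1, hkey2, hμ2]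
    exact le_of_mul_le_mul_left h1 hτ
  -- ### the segment and min-norm point
  have hopt : ∀ c ∈ segment ℝ g ghat, 0 ≤ ⟪g', c - g'⟫_ℝ := by
    intro c hc
    exact min_norm_varineq (convex_segment g ghat) hg'seg hg'min hc
  obtain ⟨ua, t, hua0, ht0, hsum, hgd⟩ := hg'seg
  have hg'eq : g' = g + t • (ghat - g) := by
    rw [← hgd, show ua = 1 - t by linarith only [hsum]]
    module
  have ht1 : t ≤ 1 := by linarith only [hsum, hua0]
  have hgw : ⟪g, g - Q x g⟫_ℝ = a^2 := by
    rw [← hNw g, real_inner_self_eq_norm_sq, ← hadef]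
  have hg'w : ⟪g', g - Q x g⟫_ℝ = a^2 + t * (⟪ghat, g - Q x g⟫_ℝ - a^2) := by
    rw [hg'eq, inner_add_left, real_inner_smul_left, inner_sub_left, hgw]
  have hQg'eq : Q x g' = Q x g + t • (Q x ghat - Q x g) := by
    rw [hg'eq, hQadd, hQsmul, hQsub]
  have hβrε : (0:ℝ) ≤ β*r + ε := by positivity
  rcases eq_or_lt_of_le ht1 with ht1e | ht1l
  · -- case t = 1 : impossible
    exfalso
    have hg'ghat : g' = ghat := by rw [hg'eq, ht1e]; module
    have h0 := hopt g (left_mem_segment ℝ g ghat)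
    rw [hg'ghat] at h0
    have h1 : ⟪ghat, g - ghat⟫_ℝ = ⟪ghat, g⟫_ℝ - ‖ghat‖^2 := by
      rw [inner_sub_right, real_inner_self_eq_norm_sq]
    have h2 : ⟪ghat, g⟫_ℝ = ⟪Q x ghat, Q x g⟫_ℝ + ⟪ghat, g - Q x g⟫_ℝ := by
      rw [hsplit ghat g, hNw ghat]
    have h3 : ⟪Q x ghat, Q x g⟫_ℝ = ‖Q x ghat‖^2 + ⟪Q x ghat, Q x g - Q x ghat⟫_ℝ := by
      rw [inner_sub_right, real_inner_self_eq_norm_sq]; ring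
    have h4 : ⟪Q x ghat, Q x g - Q x ghat⟫_ℝ ≤ (β*r+ε) * (2*ε) := by
      have c1 := real_inner_le_norm (Q x ghat) (Q x g - Q x ghat)
      have c2 : ‖Q x ghat‖ * ‖Q x g - Q x ghat‖ ≤ (β*r+ε)*(2*ε) :=
        mul_le_mul hQghatn hQdiff (norm_nonneg _) hβrε
      linarith only [c1, c2]
    have h5 : ‖Q x ghat‖^2 ≤ ‖ghat‖^2 := by
      have c1 := hdecomp ghat
      have c2 := sq_nonneg ‖ghat - Q x ghat‖
      linarith only [c1, c2]
    have hfin : (0:ℝ) < D₂*a := mul_pos hD₂pos ha0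
    nlinarith only [h0, h1, h2, h3, h4, h5, hkey, hη, hfin]
  · -- case t < 1
    have h7 : 0 ≤ ⟪g', ghat - g⟫_ℝ := by
      have h0 := hopt ghat (right_mem_segment ℝ g ghat)
      have h1 : ghat - g' = (1-t) • (ghat - g) := by rw [hg'eq]; module
      rw [h1, real_inner_smul_right] at h0
      have h2 : 0 < 1 - t := by linarith only [ht1l]
      nlinarith only [h0, h2]
    have hgg : ⟪g, ghat - g⟫_ℝ ≤ (β*r+ε)*(2*ε) - D₂*a - a^2 := by
      have h1 : ⟪g, ghat - g⟫_ℝ = ⟪g, ghat⟫_ℝ - ‖g‖^2 := by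
        rw [inner_sub_right, real_inner_self_eq_norm_sq]
      have h2 : ⟪g, ghat⟫_ℝ = ⟪Q x g, Q x ghat⟫_ℝ + ⟪ghat, g - Q x g⟫_ℝ := by
        rw [hsplit g ghat]
        congr 1
        rw [real_inner_comm, hNw ghat]
      have h3 : ⟪Q x g, Q x ghat⟫_ℝ = ‖Q x g‖^2 - ⟪Q x g, Q x g - Q x ghat⟫_ℝ := by
        rw [inner_sub_right, real_inner_self_eq_norm_sq]; ring
      have h4 : -⟪Q x g, Q x g - Q x ghat⟫_ℝ ≤ (β*r+ε)*(2*ε) := by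
        have c1 := abs_real_inner_le_norm (Q x g) (Q x g - Q x ghat)
        have c2 : ‖Q x g‖ * ‖Q x g - Q x ghat‖ ≤ (β*r+ε)*(2*ε) :=
          mul_le_mul hQgn hQdiff (norm_nonneg _) hβrε
        have c3 := abs_le.mp (c1.trans c2)
        linarith only [c3.1]
      have h5 : ‖g‖^2 = ‖Q x g‖^2 + a^2 := by rw [hdecomp g, ← hadef]
      linarith only [h1, h2, h3, h4, h5, hkey]
    have hdiffL : ‖ghat - g‖^2 ≤ 4*L^2 := by
      have c1 : ‖ghat - g‖ ≤ 2*L := le_trans (norm_sub_le _ _) (by linarith only [hgL, hghatL])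
      nlinarith only [c1, norm_nonneg (ghat - g)]
    have hexp : ⟪g', ghat - g⟫_ℝ = ⟪g, ghat - g⟫_ℝ + t * ‖ghat - g‖^2 := by
      rw [hg'eq, inner_add_left, real_inner_smul_left, real_inner_self_eq_norm_sq]
    have htlb : a^2 + D₂*a - (β*r+ε)*(2*ε) ≤ 4*t*L^2 := by
      have c1 := mul_le_mul_of_nonneg_left hdiffL ht0
      nlinarith only [h7, hexp, hgg, c1]
    have hoptg := hopt g (left_mem_segment ℝ g ghat)
    have hgg' : ‖g'‖^2 ≤ ⟪g', g⟫_ℝ := by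
      have h1 : ⟪g', g - g'⟫_ℝ = ⟪g', g⟫_ℝ - ‖g'‖^2 := by
        rw [inner_sub_right, real_inner_self_eq_norm_sq]
      linarith only [hoptg, h1]
    have hsg : ⟪g', g⟫_ℝ = ⟪Q x g', Q x g⟫_ℝ + ⟪g', g - Q x g⟫_ℝ := by
      rw [hsplit g' g, hNw g']
    have hq1 : ⟪Q x g', Q x g⟫_ℝ - ‖Q x g'‖^2 ≤ t*((β*r+ε)*(2*ε)) := by
      have h1 : ⟪Q x g', Q x g⟫_ℝ - ‖Q x g'‖^2 = ⟪Q x g', Q x g - Q x g'⟫_ℝ := by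
        rw [inner_sub_right, real_inner_self_eq_norm_sq]
      have h2 : Q x g - Q x g' = t • (Q x g - Q x ghat) := by rw [hQg'eq]; module
      have h3 : ‖Q x g - Q x g'‖ ≤ t*(2*ε) := by
        rw [h2, norm_smul, Real.norm_eq_abs, abs_of_nonneg ht0]
        exact mul_le_mul_of_nonneg_left hQdiff ht0
      have h4 : ‖Q x g'‖ ≤ β*r+ε := by
        have h5 : Q x g' - G x = (1-t) • (Q x g - G x) + t • (Q x ghat - G x) := by
          rw [hQg'eq]; module
        have ht1' : (0:ℝ) ≤ 1 - t := by linarith only [ht1l]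
        have h6 : ‖Q x g' - G x‖ ≤ (1-t)*ε + t*ε := by
          rw [h5]
          refine le_trans (norm_add_le _ _) ?_
          rw [norm_smul, norm_smul, Real.norm_eq_abs, Real.norm_eq_abs,
            abs_of_nonneg ht0, abs_of_nonneg ht1']
          have c1 := mul_le_mul_of_nonneg_left hQgG ht1'
          have c2 := mul_le_mul_of_nonneg_left hQghatG ht0
          linarith only [c1, c2]
        have h7 := norm_le_norm_add_norm_sub' (Q x g') (G x)
        linarith only [h6, h7, hGup]
      have c1 := real_inner_le_norm (Q x g') (Q x g - Q x g')
      have c2 : ‖Q x g'‖ * ‖Q x g - Q x g'‖ ≤ (β*r+ε)*(t*(2*ε)) :=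
        mul_le_mul h4 h3 (norm_nonneg _) hβrε
      rw [h1]
      nlinarith only [c1, c2]
    have hbound : ‖g' - Q x g'‖^2 ≤ a^2 - t*(a^2 + D₂*a - (β*r+ε)*(2*ε)) := by
      have h1 : ‖g' - Q x g'‖^2 = ‖g'‖^2 - ‖Q x g'‖^2 := by linarith only [hdecomp g']
      have h2 : ⟪g', g - Q x g⟫_ℝ ≤ a^2 + t*(-(D₂*a) - a^2) := by
        have c0 : ⟪ghat, g - Q x g⟫_ℝ - a^2 ≤ -(D₂*a) - a^2 := by linarith only [hkey]
        have c1 := mul_le_mul_of_nonneg_left c0 ht0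
        linarith only [hg'w, c1]
      nlinarith only [h1, hgg', hsg, hq1, h2]
    have hS1 : (55/64)*(D₂*a) ≤ a^2 + D₂*a - (β*r+ε)*(2*ε) := by
      nlinarith only [hη, sq_nonneg a]
    have hS0 : 0 ≤ a^2 + D₂*a - (β*r+ε)*(2*ε) := by
      have c1 : (0:ℝ) < D₂*a := mul_pos hD₂pos ha0
      linarith only [hS1, c1]
    have h4 : (a^2 + D₂*a - (β*r+ε)*(2*ε))*(a^2 + D₂*a - (β*r+ε)*(2*ε))
        ≤ t*(a^2 + D₂*a - (β*r+ε)*(2*ε))*(4*L^2) := by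
      have c1 := mul_nonneg hS0 (sub_nonneg.mpr htlb)
      nlinarith only [c1]
    have hLL : (0:ℝ) < 64*L^2 := by positivity
    have key2 : 3*D₂^2/(64*L^2)*a^2 ≤ t*(a^2 + D₂*a - (β*r+ε)*(2*ε)) := by
      rw [div_mul_eq_mul_div, div_le_iff₀ hLL]
      have hSsq : ((55/64)*(D₂*a))*((55/64)*(D₂*a))
          ≤ (a^2 + D₂*a - (β*r+ε)*(2*ε))*(a^2 + D₂*a - (β*r+ε)*(2*ε)) :=
        mul_self_le_mul_self (by positivity) hS1
      nlinarith only [h4, hSsq]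
    calc ‖g' - Q x g'‖^2 ≤ a^2 - t*(a^2 + D₂*a - (β*r+ε)*(2*ε)) := hbound
    _ ≤ a^2 - 3*D₂^2/(64*L^2)*a^2 := by linarith only [key2]
    _ = (1 - 3*D₂^2/(64*L^2)) * a^2 := by ring
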